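/- For every γ ∈ Aut(𝔻) and every ν ∈ ∂𝔻, the conjugated map (γ · g_ν)(z,w) := γ(g_ν(γ⁻¹z, γ⁻¹w)) equals g_{γ(ν)}, where γ(ν) denotes the boundary extension of γ applied to ν. -/

import Mathlib

open Complex

/-- Norm-squared key identity for the extremal functions. -/
lemma normSq_key_aux (ν x y : ℂ) :
    normSq (2*ν - (x+y)) - normSq (ν*(x+y) - 2*(x*y))
      = 2*(1 - normSq x)*normSq (ν-y) + 2*(1 - normSq y)*normSq (ν-x)
        + normSq (x-y)*(normSq ν - 1) := by
  simp only [Complex.normSq_apply, Complex.sub_re, Complex.sub_im, Complex.add_re,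
    Complex.add_im, Complex.mul_re, Complex.mul_im, Complex.re_ofNat, Complex.im_ofNat]
  ring

/-- Norm-squared identity for disk automorphisms. -/
lemma normSq_mobius_aux (a u : ℂ) :
    normSq (1 + (starRingEnd ℂ) a * u) - normSq (u + a)
      = (1 - normSq a) * (1 - normSq u) := by
  simp only [Complex.normSq_apply, Complex.add_re, Complex.add_im, Complex.mul_re,
    Complex.mul_im, Complex.one_re, Complex.one_im, Complex.conj_re, Complex.conj_im]
  ring

/-- Norm-squared identity for the boundary action. -/
lemma normSq_boundary_aux (a ν : ℂ) :
    normSq (ν - a) - normSq (1 - (starRingEnd ℂ) a * ν)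
      = (normSq ν - 1) * (1 - normSq a) := by
  simp only [Complex.normSq_apply, Complex.sub_re, Complex.sub_im, Complex.mul_re,
    Complex.mul_im, Complex.one_re, Complex.one_im, Complex.conj_re, Complex.conj_im]
  ring

lemma norm_lt_of_normSq_lt {p q : ℂ} (h : normSq p < normSq q) : ‖p‖ < ‖q‖ := by
  rw [Complex.normSq_eq_norm_sq, Complex.normSq_eq_norm_sq] at h
  exact lt_of_pow_lt_pow_left₀ 2 (norm_nonneg _) h

/-- The extremal denominator does not vanish. -/
lemma g_num_lt_denom {ν x y : ℂ} (hν : ‖ν‖ = 1) (hx : ‖x‖ < 1) (hy : ‖y‖ < 1) :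
    ‖ν * (x/2 + y/2) - x*y‖ < ‖ν - (x/2 + y/2)‖ := by
  have h2 : (2:ℂ) * (ν * (x/2 + y/2) - x*y) = ν*(x+y) - 2*(x*y) := by ring
  have h3 : (2:ℂ) * (ν - (x/2 + y/2)) = 2*ν - (x+y) := by ring
  have hνx : ν ≠ x := fun h => by rw [h] at hν; exact absurd hν (ne_of_lt hx)
  have hνy : ν ≠ y := fun h => by rw [h] at hν; exact absurd hν (ne_of_lt hy)
  have hνsq : normSq ν = 1 := by rw [Complex.normSq_eq_norm_sq, hν]; norm_num
  have hxsq : normSq x < 1 := by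
    rw [Complex.normSq_eq_norm_sq]; nlinarith [norm_nonneg x]
  have hysq : normSq y < 1 := by
    rw [Complex.normSq_eq_norm_sq]; nlinarith [norm_nonneg y]
  have hpy : 0 < normSq (ν - y) := by
    rw [Complex.normSq_pos, sub_ne_zero]; exact hνy
  have hpx : 0 < normSq (ν - x) := by
    rw [Complex.normSq_pos, sub_ne_zero]; exact hνx
  have key := normSq_key_aux ν x y
  rw [hνsq] at key
  have hlt : normSq (ν*(x+y) - 2*(x*y)) < normSq (2*ν - (x+y)) := by
    nlinarith [Complex.normSq_nonneg (ν - x), Complex.normSq_nonneg (ν - y)]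
  have := norm_lt_of_normSq_lt hlt
  rw [← h2, ← h3, norm_mul, norm_mul] at this
  have h2n : (0:ℝ) < ‖(2:ℂ)‖ := by norm_num
  exact lt_of_mul_lt_mul_left this (le_of_lt h2n)

lemma g_denom_ne {ν x y : ℂ} (hν : ‖ν‖ = 1) (hx : ‖x‖ < 1) (hy : ‖y‖ < 1) :
    ν - (x/2 + y/2) ≠ 0 := by
  intro h
  have : ‖x/2 + y/2‖ < 1 := by
    calc ‖x/2 + y/2‖ ≤ ‖x/2‖ + ‖y/2‖ := norm_add_le _ _
    _ = ‖x‖/2 + ‖y‖/2 := by simp [norm_div]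
    _ < 1 := by linarith
  rw [sub_eq_zero] at h
  rw [h] at hν
  exact absurd hν (ne_of_lt this)

set_option maxHeartbeats 2000000 in
/-- For every Möbius automorphism `γ(z) = μ(z−a)/(1−conj(a)z)` of the disk
(`‖a‖ < 1`, `‖μ‖ = 1`, with inverse `γ⁻¹(w) = (w/μ + a)/(1 + conj(a)·(w/μ))`) and every
`ν ∈ ∂𝔻`, the conjugated map `(γ · g_ν)(z,w) = γ(g_ν(γ⁻¹z, γ⁻¹w))` equals `g_{γ(ν)}`,
where `γ(ν)` is the boundary extension of `γ` applied to `ν`. -/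
theorem automorphism_equivariance_of_extremals
    (a μ : ℂ) (ha : ‖a‖ < 1) (hμ : ‖μ‖ = 1)
    (γ γinv : ℂ → ℂ)
    (hγ : ∀ z : ℂ, γ z = μ * (z - a) / (1 - (starRingEnd ℂ) a * z))
    (hγinv : ∀ w : ℂ, γinv w = (w / μ + a) / (1 + (starRingEnd ℂ) a * (w / μ)))
    (g : ℂ → ℂ → ℂ → ℂ)
    (hg : ∀ ν z w : ℂ,
      g ν z w = (ν * (z / 2 + w / 2) - z * w) / (ν - (z / 2 + w / 2)))
    (ν : ℂ) (hν : ‖ν‖ = 1) :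
    ∀ z w : ℂ, ‖z‖ < 1 → ‖w‖ < 1 →
      γ (g ν (γinv z) (γinv w)) = g (γ ν) z w := by
  intro z w hz hw
  set c : ℂ := (starRingEnd ℂ) a with hc
  have hca : ‖c‖ = ‖a‖ := by rw [hc]; exact RCLike.norm_conj a
  have hμ0 : μ ≠ 0 := by intro h; rw [h] at hμ; simp at hμ
  have hDU : ∀ t : ℂ, ‖t‖ < 1 → μ + c * t ≠ 0 := by
    intro t ht h
    have h2 : μ = -(c * t) := by linear_combination h
    have : ‖μ‖ < 1 := by
      rw [h2, norm_neg, norm_mul, hca]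
      nlinarith [norm_nonneg a, norm_nonneg t]
    rw [hμ] at this; exact absurd this (lt_irrefl 1)
  have hdu : ∀ t : ℂ, ‖t‖ < 1 → 1 + c * (t / μ) ≠ 0 := by
    intro t ht
    have h1 : 1 + c * (t / μ) = (μ + c * t) / μ := by field_simp
    rw [h1]
    exact div_ne_zero (hDU t ht) hμ0
  have hginv : ∀ t : ℂ, ‖t‖ < 1 → γinv t = (t + a * μ) / (μ + c * t) := by
    intro t ht
    rw [hγinv]
    rw [div_eq_div_iff (hdu t ht) (hDU t ht)]
    field_simp
  have hginv_lt : ∀ t : ℂ, ‖t‖ < 1 → ‖γinv t‖ < 1 := by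
    intro t ht
    rw [hγinv]
    have hu : ‖t / μ‖ < 1 := by rw [norm_div, hμ, div_one]; exact ht
    have hid := normSq_mobius_aux a (t / μ)
    rw [← hc] at hid
    have hasq : normSq a < 1 := by
      rw [Complex.normSq_eq_norm_sq]; nlinarith [norm_nonneg a]
    have husq : normSq (t / μ) < 1 := by
      rw [Complex.normSq_eq_norm_sq]; nlinarith [norm_nonneg (t / μ)]
    have hlt : normSq (t / μ + a) < normSq (1 + c * (t / μ)) := by nlinarith
    have hn := norm_lt_of_normSq_lt hlt
    rw [norm_div, div_lt_one (norm_pos_iff.mpr (hdu t ht))]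
    exact hn
  have hx1 : ‖γinv z‖ < 1 := hginv_lt z hz
  have hy1 : ‖γinv w‖ < 1 := hginv_lt w hw
  have hgval_lt : ‖g ν (γinv z) (γinv w)‖ < 1 := by
    rw [hg]
    rw [norm_div, div_lt_one (norm_pos_iff.mpr (g_denom_ne hν hx1 hy1))]
    exact g_num_lt_denom hν hx1 hy1
  have h1g : 1 - c * g ν (γinv z) (γinv w) ≠ 0 := by
    intro h
    have h2 : (1 : ℂ) = c * g ν (γinv z) (γinv w) := by linear_combination h
    have : (1 : ℝ) < 1 := by
      calc (1 : ℝ) = ‖(1 : ℂ)‖ := by simp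
      _ = ‖c‖ * ‖g ν (γinv z) (γinv w)‖ := by rw [h2, norm_mul]
      _ < 1 := by
          rw [hca]
          nlinarith [norm_nonneg a, norm_nonneg (g ν (γinv z) (γinv w)), hgval_lt]
    exact absurd this (lt_irrefl 1)
  have he : 1 - c * ν ≠ 0 := by
    intro h
    have h2 : (1 : ℂ) = c * ν := by linear_combination h
    have : (1 : ℝ) < 1 := by
      calc (1 : ℝ) = ‖(1 : ℂ)‖ := by simp
      _ = ‖c‖ * ‖ν‖ := by rw [h2, norm_mul]
      _ < 1 := by rw [hca, hν]; nlinarith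
    exact absurd this (lt_irrefl 1)
  have hνsq : normSq ν = 1 := by rw [Complex.normSq_eq_norm_sq, hν]; norm_num
  have hγν : ‖γ ν‖ = 1 := by
    rw [hγ]
    have hid := normSq_boundary_aux a ν
    rw [← hc, hνsq] at hid
    have heq : normSq (ν - a) = normSq (1 - c * ν) := by linarith
    have heqn : ‖ν - a‖ = ‖1 - c * ν‖ := by
      rw [Complex.normSq_eq_norm_sq, Complex.normSq_eq_norm_sq] at heq
      nlinarith [norm_nonneg (ν - a), norm_nonneg (1 - c * ν)]
    rw [norm_div, norm_mul, hμ, one_mul, heqn, div_self (norm_ne_zero_iff.mpr he)]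
  -- abbreviations
  set X : ℂ := (z + a * μ) / (μ + c * z) with hX
  set Y : ℂ := (w + a * μ) / (μ + c * w) with hY
  have hXn : ‖X‖ < 1 := by rw [hX, ← hginv z hz]; exact hx1
  have hYn : ‖Y‖ < 1 := by rw [hY, ← hginv w hw]; exact hy1
  have hDg : ν - (X / 2 + Y / 2) ≠ 0 := g_denom_ne hν hXn hYn
  have hDUz := hDU z hz
  have hDUw := hDU w hw
  set P : ℂ := ν * ((z + a * μ) * (μ + c * w) / 2 + (w + a * μ) * (μ + c * z) / 2)
      - (z + a * μ) * (w + a * μ) with hP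
  set Q : ℂ := ν * ((μ + c * z) * (μ + c * w))
      - ((z + a * μ) * (μ + c * w) / 2 + (w + a * μ) * (μ + c * z) / 2) with hQ
  have hQeq : Q = (ν - (X / 2 + Y / 2)) * ((μ + c * z) * (μ + c * w)) := by
    rw [hQ, hX, hY]
    field_simp
  have hQ0 : Q ≠ 0 := by
    rw [hQeq]; exact mul_ne_zero hDg (mul_ne_zero hDUz hDUw)
  have hnum : ν * (X / 2 + Y / 2) - X * Y
      = P / ((μ + c * z) * (μ + c * w)) := by
    rw [hP, eq_div_iff (mul_ne_zero hDUz hDUw)]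
    have hXz : X * (μ + c * z) = z + a * μ := by rw [hX]; exact div_mul_cancel₀ _ hDUz
    have hYw : Y * (μ + c * w) = w + a * μ := by rw [hY]; exact div_mul_cancel₀ _ hDUw
    linear_combination (ν / 2 * (μ + c * w) - Y * (μ + c * w)) * hXz
      + (ν / 2 * (μ + c * z) - (z + a * μ)) * hYw
  have hden : ν - (X / 2 + Y / 2) = Q / ((μ + c * z) * (μ + c * w)) := by
    rw [hQeq]
    rw [mul_div_cancel_right₀ _ (mul_ne_zero hDUz hDUw)]
  have hPQ : g ν (γinv z) (γinv w) = P / Q := by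
    rw [hg, hginv z hz, hginv w hw, ← hX, ← hY, hnum, hden]
    rw [div_div_div_cancel_right₀]
    exact mul_ne_zero hDUz hDUw
  have hfrac : 1 - c * (P / Q) = (Q - c * P) / Q := by field_simp
  have hgood : Q - c * P ≠ 0 := by
    have h1g' : 1 - c * (P / Q) ≠ 0 := by rw [← hPQ]; exact h1g
    rw [hfrac, div_ne_zero_iff] at h1g'
    exact h1g'.1
  have hLHS : γ (g ν (γinv z) (γinv w)) = μ * (P - a * Q) / (Q - c * P) := by
    rw [hγ, hPQ]
    rw [div_eq_div_iff (by rw [hfrac]; exact div_ne_zero hgood hQ0) hgood]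
    rw [div_sub' hQ0, hfrac]
    ring
  have hS : γ ν - (z / 2 + w / 2) ≠ 0 := g_denom_ne hγν hz hw
  rw [hγ ν] at hS
  have hS2 : μ * (ν - a) - (1 - c * ν) * (z / 2 + w / 2) ≠ 0 := by
    have heq2 : μ * (ν - a) - (1 - c * ν) * (z / 2 + w / 2)
        = (1 - c * ν) * (μ * (ν - a) / (1 - c * ν) - (z / 2 + w / 2)) := by
      rw [mul_sub (1 - c * ν), mul_div_cancel₀ _ he]
    rw [heq2]; exact mul_ne_zero he hS
  have hRHS : g (γ ν) z w
      = (μ * (ν - a) * (z / 2 + w / 2) - (1 - c * ν) * (z * w))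
        / (μ * (ν - a) - (1 - c * ν) * (z / 2 + w / 2)) := by
    rw [hg, hγ ν]
    rw [div_eq_div_iff hS hS2]
    have h1 : μ * (ν - a) / (1 - c * ν) * (1 - c * ν) = μ * (ν - a) := div_mul_cancel₀ _ he
    linear_combination (-(μ * (ν - a) / (1 - c * ν) * (z / 2 + w / 2) - z * w
      - (z / 2 + w / 2) * (μ * (ν - a) / (1 - c * ν) - (z / 2 + w / 2)))) * h1
  rw [hLHS, hRHS, div_eq_div_iff hgood hS2, hP, hQ]
  ring
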